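/- Let F be a field, R an associative unital F-algebra, and A, B left R-modules whose F-vector space structures are obtained by restriction of scalars along F → R. Suppose A and B are simple R-modules, A is finite-dimensional over F, and there is a nonzero F-bilinear pairing β : A × B → F satisfying β(r•a, b) = β(a, r•b) for all r ∈ R, a ∈ A, b ∈ B. Then A and B are isomorphic as R-modules. -/
import Mathlib


/-- Let `R` be an associative unital `F`-algebra and `A`, `B` simple
left `R`-modules (with `F`-vector space structures obtained by restriction of scalars),
`A` finite-dimensional over `F`. If there is a nonzero `R`-invariant `F`-bilinear
pairing `β : A × B → F`, then `A ≅ B` as `R`-modules. -/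
theorem statement9 (F R A B : Type*) [Field F] [Ring R] [Algebra F R]
    [AddCommGroup A] [Module R A] [Module F A] [IsScalarTower F R A]
    [AddCommGroup B] [Module R B] [Module F B] [IsScalarTower F R B]
    [IsSimpleModule R A] [IsSimpleModule R B]
    [FiniteDimensional F A]
    (β : A →ₗ[F] B →ₗ[F] F) (hβ : β ≠ 0)
    (hinv : ∀ (r : R) (a : A) (b : B), β (r • a) b = β a (r • b)) :
    Nonempty (A ≃ₗ[R] B) := by
  classical
  -- left kernel of β is a submodule of A, hence 0
  have hkerA : ∀ a : A, (∀ b, β a b = 0) → a = 0 := by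
    intro a ha
    let K : Submodule R A :=
      { carrier := {a | ∀ b, β a b = 0}
        add_mem' := by intro x y hx hy; intro b; simp [map_add, hx b, hy b]
        zero_mem' := by intro b; simp
        smul_mem' := by intro r x hx; intro b; rw [hinv]; exact hx _ }
    rcases eq_bot_or_eq_top K with h | h
    · have : a ∈ K := ha
      rw [h] at this
      simpa using this
    · exfalso
      apply hβ
      ext x y
      have hx : x ∈ K := by rw [h]; trivial
      simpa using hx y
  -- right kernel of β is a submodule of B, hence 0
  have hkerB : ∀ b : B, (∀ a, β a b = 0) → b = 0 := by
    intro b hb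
    let K : Submodule R B :=
      { carrier := {b | ∀ a, β a b = 0}
        add_mem' := by intro x y hx hy; intro a; simp [map_add, hx a, hy a]
        zero_mem' := by intro a; simp
        smul_mem' := by intro r x hx; intro a; rw [← hinv]; exact hx _ }
    rcases eq_bot_or_eq_top K with h | h
    · have : b ∈ K := hb
      rw [h] at this
      simpa using this
    · exfalso
      apply hβ
      ext x y
      have hy : y ∈ K := by rw [h]; trivial
      simpa using hy x
  -- commutators act as zero on A
  have hcommA : ∀ (r s : R) (a : A), (r * s) • a = (s * r) • a := by
    intro r s a
    have key : ∀ b, β ((r * s) • a) b = β ((s * r) • a) b := by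
      intro b
      rw [mul_smul, hinv r, hinv s, ← mul_smul, ← hinv (s * r)]
    have : ∀ b, β ((r * s) • a - (s * r) • a) b = 0 := by
      intro b; rw [map_sub, LinearMap.sub_apply, key b, sub_self]
    have h0 := hkerA _ this
    rwa [sub_eq_zero] at h0
  -- commutators act as zero on B
  have hcommB : ∀ (r s : R) (b : B), (r * s) • b = (s * r) • b := by
    intro r s b
    have key : ∀ a, β a ((r * s) • b) = β a ((s * r) • b) := by
      intro a
      rw [← hinv (r * s), mul_smul, hinv r, hinv s, ← mul_smul]
    have : ∀ a, β a ((r * s) • b - (s * r) • b) = 0 := by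
      intro a; rw [map_sub, key a, sub_self]
    have h0 := hkerB _ this
    rwa [sub_eq_zero] at h0
  -- pick nonzero generators
  haveI : Nontrivial A := IsSimpleModule.nontrivial R A
  haveI : Nontrivial B := IsSimpleModule.nontrivial R B
  obtain ⟨a₀, ha₀⟩ := exists_ne (0 : A)
  obtain ⟨b₀, hb₀⟩ := exists_ne (0 : B)
  have hspanA : Submodule.span R {a₀} = ⊤ := by
    rcases eq_bot_or_eq_top (Submodule.span R {a₀}) with h | h
    · exfalso; apply ha₀
      have : a₀ ∈ Submodule.span R {a₀} := Submodule.mem_span_singleton_self a₀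
      rw [h] at this; simpa using this
    · exact h
  have hspanB : Submodule.span R {b₀} = ⊤ := by
    rcases eq_bot_or_eq_top (Submodule.span R {b₀}) with h | h
    · exfalso; apply hb₀
      have : b₀ ∈ Submodule.span R {b₀} := Submodule.mem_span_singleton_self b₀
      rw [h] at this; simpa using this
    · exact h
  -- if r kills a₀ it kills all of A, and then all of B (and symmetrically)
  have hAtoB : ∀ r : R, r • a₀ = 0 → r • b₀ = 0 := by
    intro r hr
    have hA : ∀ a : A, r • a = 0 := by
      intro a
      have ha : a ∈ Submodule.span R {a₀} := by rw [hspanA]; trivial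
      obtain ⟨s, rfl⟩ := Submodule.mem_span_singleton.mp ha
      rw [← mul_smul, hcommA, mul_smul, hr, smul_zero]
    have hB : ∀ b : B, r • b = 0 := by
      intro b
      apply hkerB
      intro a
      rw [← hinv, hA a, map_zero, LinearMap.zero_apply]
    exact hB b₀
  have hBtoA : ∀ r : R, r • b₀ = 0 → r • a₀ = 0 := by
    intro r hr
    have hB : ∀ b : B, r • b = 0 := by
      intro b
      have hb : b ∈ Submodule.span R {b₀} := by rw [hspanB]; trivial
      obtain ⟨s, rfl⟩ := Submodule.mem_span_singleton.mp hb
      rw [← mul_smul, hcommB, mul_smul, hr, smul_zero]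
    have hA : ∀ a : A, r • a = 0 := by
      intro a
      apply hkerA
      intro b
      rw [hinv, hB b, map_zero]
    exact hA a₀
  -- build the isomorphism through R ⧸ ker
  let f : R →ₗ[R] A := LinearMap.toSpanSingleton R A a₀
  let g : R →ₗ[R] B := LinearMap.toSpanSingleton R B b₀
  have hfsurj : Function.Surjective f := by
    rw [← LinearMap.range_eq_top, ← LinearMap.span_singleton_eq_range, hspanA]
  have hgsurj : Function.Surjective g := by
    rw [← LinearMap.range_eq_top, ← LinearMap.span_singleton_eq_range, hspanB]
  have hker : LinearMap.ker f = LinearMap.ker g := by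
    ext r
    simp only [LinearMap.mem_ker]
    constructor
    · exact hAtoB r
    · exact hBtoA r
  exact ⟨((f.quotKerEquivOfSurjective hfsurj).symm.trans
      (Submodule.quotEquivOfEq _ _ hker)).trans (g.quotKerEquivOfSurjective hgsurj)⟩
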